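/- With Ω = B(0,ζ), T = ζ and α(x,t) = (γ+|x|)(γ+t) as above, the function f(x,t) = (|x| + √t)^{α(x,t)} belongs to the variable Hölder space C^{α(·)}(Ω̄_T): there is C with |f(x,t) - f(y,s)| ≤ C d((x,t),(y,s))^{α(x,t)} for all (x,t), (y,s) ∈ Ω_T. -/
import Mathlib
set_option maxHeartbeats 1000000

open Real Set

/-- The parabolic distance on `ℝⁿ × ℝ`. -/
noncomputable def pd {n : ℕ} (P Q : (Fin n → ℝ) × ℝ) : ℝ :=
  max ‖P.1 - Q.1‖ (Real.sqrt |P.2 - Q.2|)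

private lemma my_add_rpow_le {x y p : ℝ} (hx : 0 ≤ x) (hy : 0 ≤ y) (hp : 0 ≤ p) (hp1 : p ≤ 1) :
    (x + y) ^ p ≤ x ^ p + y ^ p := by
  have h := NNReal.rpow_add_le_add_rpow (⟨x, hx⟩ : NNReal) (⟨y, hy⟩ : NNReal) hp hp1
  have h2 := NNReal.coe_le_coe.2 h
  push_cast [NNReal.coe_rpow] at h2
  exact h2

private lemma my_rpow_abs_sub {u v p : ℝ} (hu : 0 ≤ u) (hv : 0 ≤ v) (hp : 0 ≤ p) (hp1 : p ≤ 1) :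
    |u ^ p - v ^ p| ≤ |u - v| ^ p := by
  rcases le_total v u with h | h
  · rw [abs_of_nonneg (sub_nonneg.2 (Real.rpow_le_rpow hv h hp)),
      abs_of_nonneg (sub_nonneg.2 h)]
    have : u ^ p ≤ v ^ p + (u - v) ^ p := by
      have := my_add_rpow_le hv (sub_nonneg.2 h) hp hp1
      simpa using this
    linarith
  · rw [abs_of_nonpos (sub_nonpos.2 (Real.rpow_le_rpow hu h hp)),
      abs_of_nonpos (sub_nonpos.2 h), neg_sub, neg_sub]
    have : v ^ p ≤ u ^ p + (v - u) ^ p := by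
      have := my_add_rpow_le hu (sub_nonneg.2 h) hp hp1
      simpa using this
    linarith

private lemma my_sqrt_sub_le {t s : ℝ} (hs : 0 ≤ s) (hts : s ≤ t) :
    Real.sqrt t - Real.sqrt s ≤ Real.sqrt (t - s) := by
  have h := my_add_rpow_le hs (sub_nonneg.2 hts) (by norm_num : (0:ℝ) ≤ 1/2) (by norm_num)
  rw [← Real.sqrt_eq_rpow, ← Real.sqrt_eq_rpow, ← Real.sqrt_eq_rpow] at h
  have : s + (t - s) = t := by ring
  rw [this] at h
  linarith

private lemma my_abs_sqrt_sub {t s : ℝ} (ht : 0 ≤ t) (hs : 0 ≤ s) :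
    |Real.sqrt t - Real.sqrt s| ≤ Real.sqrt |t - s| := by
  rcases le_total s t with h | h
  · rw [abs_of_nonneg (sub_nonneg.2 (Real.sqrt_le_sqrt h)), abs_of_nonneg (sub_nonneg.2 h)]
    exact my_sqrt_sub_le hs h
  · rw [abs_of_nonpos (sub_nonpos.2 (Real.sqrt_le_sqrt h)), abs_of_nonpos (sub_nonpos.2 h),
      neg_sub, neg_sub]
    exact my_sqrt_sub_le ht h

private lemma my_exp_sub_exp {x y : ℝ} (h : y ≤ x) :
    Real.exp x - Real.exp y ≤ (x - y) * Real.exp x := by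
  have e1 : Real.exp x * Real.exp (y - x) = Real.exp y := by
    rw [← Real.exp_add]; ring_nf
  nlinarith [Real.add_one_le_exp (y - x), Real.exp_pos x]

/-- key exponent-variation lemma: `|v^a - v^b| ≤ (1/m) |a-b|` for `v ∈ (0,2]`,
`a, b ∈ [m,1]`, `m ≤ 1/2`. -/
private lemma my_rpow_exp_diff {v a b m : ℝ} (hv : 0 < v) (hv2 : v ≤ 2) (hm : 0 < m)
    (hm2 : m ≤ 1/2) (ham : m ≤ a) (ha1 : a ≤ 1) (hbm : m ≤ b) (hb1 : b ≤ 1) :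
    |v ^ a - v ^ b| ≤ (1/m) * |a - b| := by
  have key : ∀ a b : ℝ, m ≤ a → a ≤ 1 → m ≤ b → b ≤ 1 → b ≤ a →
      |v ^ a - v ^ b| ≤ (1/m) * |a - b| := by
    intro a b ham ha1 hbm hb1 hba
    rw [Real.rpow_def_of_pos hv, Real.rpow_def_of_pos hv]
    set L := Real.log v with hL
    rw [abs_of_nonneg (sub_nonneg.2 hba)]
    rcases le_or_gt 0 L with hL0 | hL0
    · -- L ≥ 0, so v ≥ 1
      have h1 : L * b ≤ L * a := by nlinarith
      have h2 : Real.exp (L * a) - Real.exp (L * b) ≤ (L * a - L * b) * Real.exp (L * a) :=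
        my_exp_sub_exp h1
      have h3 : Real.exp (L * a) ≤ 2 := by
        have : L * a ≤ L := by nlinarith
        calc Real.exp (L * a) ≤ Real.exp L := Real.exp_le_exp.2 this
          _ = v := Real.exp_log hv
          _ ≤ 2 := hv2
      have h4 : L ≤ 1 := by
        have := Real.log_le_log hv hv2
        have := Real.log_two_lt_d9
        simp only [hL]; linarith
      have h5 : 0 ≤ a - b := by linarith
      have h6 : 2 ≤ 1/m := by
        rw [le_div_iff₀ hm]; nlinarith
      have hmono : Real.exp (L * b) ≤ Real.exp (L * a) := Real.exp_le_exp.2 h1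
      rw [abs_of_nonneg (sub_nonneg.2 hmono)]
      calc Real.exp (L * a) - Real.exp (L * b) ≤ (L * a - L * b) * Real.exp (L * a) := h2
        _ = L * (a - b) * Real.exp (L * a) := by ring
        _ ≤ 1 * (a - b) * 2 := by nlinarith [Real.exp_pos (L * a)]
        _ ≤ (1/m) * (a - b) := by nlinarith
    · -- L < 0, so v < 1
      have h1 : L * a ≤ L * b := by nlinarith
      have h2 : Real.exp (L * b) - Real.exp (L * a) ≤ (L * b - L * a) * Real.exp (L * b) :=
        my_exp_sub_exp h1
      have h3 : Real.exp (L * b) ≤ Real.exp (L * m) := by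
        apply Real.exp_le_exp.2; nlinarith
      have h4 : (-L) * Real.exp (L * m) ≤ 1 / m := by
        have hw : -(L * m) + 1 ≤ Real.exp (-(L * m)) := Real.add_one_le_exp _
        have he : Real.exp (L * m) * Real.exp (-(L * m)) = 1 := by
          rw [← Real.exp_add]; ring_nf; exact Real.exp_zero
        rw [le_div_iff₀ hm]
        nlinarith [Real.exp_pos (L * m), Real.exp_pos (-(L * m))]
      have h5 : 0 ≤ a - b := by linarith
      rw [abs_of_nonpos (by linarith [sub_nonneg.2 (Real.exp_le_exp.2 h1)] :
        Real.exp (L * a) - Real.exp (L * b) ≤ 0), neg_sub]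
      calc Real.exp (L * b) - Real.exp (L * a) ≤ (L * b - L * a) * Real.exp (L * b) := h2
        _ = ((-L) * Real.exp (L * b)) * (a - b) := by ring
        _ ≤ ((-L) * Real.exp (L * m)) * (a - b) := by nlinarith
        _ ≤ (1/m) * (a - b) := by nlinarith
  rcases le_total b a with h | h
  · exact key a b ham ha1 hbm hb1 h
  · rw [abs_sub_comm, abs_sub_comm a b]; exact key b a hbm hb1 ham ha1 h


private lemma my_main_est {u v a b d M : ℝ} (hu : 0 < u) (hv : 0 < v) (hv2 : v ≤ 2)
    (hM : 0 < M) (hM2 : M ≤ 1/2) (ha : M ≤ a) (ha1 : a ≤ 1) (hb : M ≤ b) (hb1 : b ≤ 1)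
    (hd0 : 0 < d) (hd2 : d ≤ 2) (huv : |u - v| ≤ 2 * d) (hab : |a - b| ≤ d + d ^ 2)
    (hMe : 1 / M ≤ Real.exp 4) :
    |u ^ a - v ^ b| ≤ (2 + 6 * Real.exp 4) * d ^ a := by
  have ha0 : 0 < a := lt_of_lt_of_le hM ha
  have hda0 : 0 ≤ d ^ a := Real.rpow_nonneg hd0.le a
  have hdda : d ≤ 2 * d ^ a := by
    have e1 : d = d ^ a * d ^ (1 - a) := by
      rw [← Real.rpow_add hd0]; ring_nf; exact (Real.rpow_one d).symm
    have e2 : d ^ (1 - a) ≤ 2 ^ (1 - a) :=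
      Real.rpow_le_rpow hd0.le hd2 (by linarith)
    have e3 : (2:ℝ) ^ (1 - a) ≤ 2 := by
      calc (2:ℝ) ^ (1 - a) ≤ (2:ℝ) ^ (1:ℝ) :=
          Real.rpow_le_rpow_of_exponent_le one_le_two (by linarith)
        _ = 2 := Real.rpow_one 2
    calc d = d ^ a * d ^ (1 - a) := e1
      _ ≤ d ^ a * 2 := by nlinarith [Real.rpow_nonneg hd0.le (1 - a)]
      _ = 2 * d ^ a := by ring
  have term1 : |u ^ a - v ^ a| ≤ 2 * d ^ a := by
    calc |u ^ a - v ^ a| ≤ |u - v| ^ a := my_rpow_abs_sub hu.le hv.le ha0.le ha1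
      _ ≤ (2 * d) ^ a := Real.rpow_le_rpow (abs_nonneg _) huv ha0.le
      _ = 2 ^ a * d ^ a := Real.mul_rpow (by norm_num) hd0.le
      _ ≤ 2 * d ^ a := by
          apply mul_le_mul_of_nonneg_right _ hda0
          calc (2:ℝ) ^ a ≤ (2:ℝ) ^ (1:ℝ) :=
              Real.rpow_le_rpow_of_exponent_le one_le_two ha1
            _ = 2 := Real.rpow_one 2
  have term2 : |v ^ a - v ^ b| ≤ 6 * Real.exp 4 * d ^ a := by
    have h1 := my_rpow_exp_diff hv hv2 hM hM2 ha ha1 hb hb1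
    have h3 : |a - b| ≤ 3 * d := by nlinarith
    have hM' : 0 < 1 / M := by positivity
    calc |v ^ a - v ^ b| ≤ (1 / M) * |a - b| := h1
      _ ≤ Real.exp 4 * (3 * d) := by nlinarith [abs_nonneg (a - b)]
      _ ≤ Real.exp 4 * (3 * (2 * d ^ a)) := by nlinarith [Real.exp_pos (4:ℝ)]
      _ = 6 * Real.exp 4 * d ^ a := by ring
  calc |u ^ a - v ^ b| ≤ |u ^ a - v ^ a| + |v ^ a - v ^ b| := abs_sub_le _ _ _
    _ ≤ 2 * d ^ a + 6 * Real.exp 4 * d ^ a := add_le_add term1 term2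
    _ = (2 + 6 * Real.exp 4) * d ^ a := by ring

/-- With `α(x,t) = (γ+|x|)(γ+t)` on `Ω_T = B(0,ζ) × (0,ζ)`, the function
`f(x,t) = (|x| + √t)^{α(x,t)}` belongs to the variable Hölder space `C^{α(·)}`:
there is `C` with `|f(x,t) - f(y,s)| ≤ C d((x,t),(y,s))^{α(x,t)}` on `Ω_T`. -/
theorem example_function_in_variable_holder (n : ℕ) (hn : 0 < n) (γ ζ : ℝ)
    (hγ1 : Real.exp (-2) < γ) (hγ2 : γ < 1) (hζ1 : 0 < ζ) (hζ2 : ζ < 1 - γ) :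
    ∃ C > (0:ℝ), ∀ P ∈ (Metric.ball (0 : Fin n → ℝ) ζ) ×ˢ Ioo (0:ℝ) ζ,
      ∀ Q ∈ (Metric.ball (0 : Fin n → ℝ) ζ) ×ˢ Ioo (0:ℝ) ζ,
        |(‖P.1‖ + Real.sqrt P.2) ^ ((γ + ‖P.1‖) * (γ + P.2)) -
            (‖Q.1‖ + Real.sqrt Q.2) ^ ((γ + ‖Q.1‖) * (γ + Q.2))| ≤
          C * pd P Q ^ ((γ + ‖P.1‖) * (γ + P.2)) := by
  have hγ0 : 0 < γ := lt_trans (Real.exp_pos _) hγ1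
  have hζ1' : ζ < 1 := by linarith
  refine ⟨2 + 6 * Real.exp 4, by positivity, ?_⟩
  rintro ⟨x, t⟩ ⟨hx, ht0, htζ⟩ ⟨y, s⟩ ⟨hy, hs0, hsζ⟩
  rw [Metric.mem_ball, dist_zero_right] at hx hy
  simp only
  set X := ‖x‖ with hX
  set Y := ‖y‖ with hY
  have hX0 : 0 ≤ X := norm_nonneg x
  have hY0 : 0 ≤ Y := norm_nonneg y
  set a := (γ + X) * (γ + t) with ha
  set b := (γ + Y) * (γ + s) with hb
  set d := pd (x, t) (y, s) with hd
  -- basic bounds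
  have hm : Real.exp (-4) = Real.exp (-2) * Real.exp (-2) := by
    rw [← Real.exp_add]; norm_num
  have ham : Real.exp (-4) ≤ a := by
    rw [hm]
    have h1 : Real.exp (-2) ≤ γ + X := by linarith
    have h2 : Real.exp (-2) ≤ γ + t := by linarith
    have := Real.exp_pos (-2)
    nlinarith
  have hbm : Real.exp (-4) ≤ b := by
    rw [hm]
    have h1 : Real.exp (-2) ≤ γ + Y := by linarith
    have h2 : Real.exp (-2) ≤ γ + s := by linarith
    have := Real.exp_pos (-2)
    nlinarith
  have hmpos : 0 < Real.exp (-4) := Real.exp_pos _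
  have ha0 : 0 < a := lt_of_lt_of_le hmpos ham
  have hb0 : 0 < b := lt_of_lt_of_le hmpos hbm
  have ha1 : a ≤ 1 := by nlinarith
  have hb1 : b ≤ 1 := by nlinarith
  have hst : Real.sqrt t ≤ 1 := by
    rw [show (1:ℝ) = Real.sqrt 1 by simp]
    exact Real.sqrt_le_sqrt (by linarith)
  have hss : Real.sqrt s ≤ 1 := by
    rw [show (1:ℝ) = Real.sqrt 1 by simp]
    exact Real.sqrt_le_sqrt (by linarith)
  have hst0 : 0 < Real.sqrt t := Real.sqrt_pos.2 ht0
  have hss0 : 0 < Real.sqrt s := Real.sqrt_pos.2 hs0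
  have hu0 : 0 < X + Real.sqrt t := by positivity
  have hv0 : 0 < Y + Real.sqrt s := by positivity
  have hu2 : X + Real.sqrt t ≤ 2 := by linarith
  have hv2 : Y + Real.sqrt s ≤ 2 := by linarith
  have hdx : ‖x - y‖ ≤ d := by rw [hd]; exact le_max_left _ _
  have hdt : Real.sqrt |t - s| ≤ d := by rw [hd]; exact le_max_right _ _
  have hd0 : 0 ≤ d := le_trans (Real.sqrt_nonneg _) hdt
  have hXYd : |X - Y| ≤ d := le_trans (abs_norm_sub_norm_le x y) hdx
  have htsd : |t - s| ≤ d ^ 2 := by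
    nlinarith [Real.sq_sqrt (abs_nonneg (t - s)), Real.sqrt_nonneg |t - s|]
  have hd2 : d ≤ 2 := by
    rw [hd]
    apply max_le
    · calc ‖x - y‖ ≤ ‖x‖ + ‖y‖ := norm_sub_le x y
        _ ≤ 2 := by rw [← hX, ← hY]; linarith
    · have h1 : |t - s| ≤ 1 := by rw [abs_le]; constructor <;> linarith
      calc Real.sqrt |t - s| ≤ Real.sqrt 1 := Real.sqrt_le_sqrt h1
        _ ≤ 2 := by rw [Real.sqrt_one]; norm_num
  have huv : |(X + Real.sqrt t) - (Y + Real.sqrt s)| ≤ 2 * d := by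
    have h1 : |Real.sqrt t - Real.sqrt s| ≤ d :=
      le_trans (my_abs_sqrt_sub ht0.le hs0.le) hdt
    calc |(X + Real.sqrt t) - (Y + Real.sqrt s)|
        = |(X - Y) + (Real.sqrt t - Real.sqrt s)| := by ring_nf
      _ ≤ |X - Y| + |Real.sqrt t - Real.sqrt s| := abs_add_le _ _
      _ ≤ 2 * d := by linarith
  rcases eq_or_lt_of_le hd0 with heq | hdpos
  · -- degenerate case d = 0 : the two points coincide
    have h1 : x = y := by
      have : ‖x - y‖ = 0 := le_antisymm (heq ▸ hdx) (norm_nonneg _)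
      exact sub_eq_zero.1 (norm_eq_zero.1 this)
    have h2 : t = s := by
      have h3 : Real.sqrt |t - s| = 0 := le_antisymm (heq ▸ hdt) (Real.sqrt_nonneg _)
      have h4 := abs_eq_zero.1 ((Real.sqrt_eq_zero (abs_nonneg _)).1 h3)
      linarith
    have hXY' : X = Y := by rw [hX, hY, h1]
    have hab : a = b := by rw [ha, hb, hXY', h2]
    rw [← heq, Real.zero_rpow ha0.ne', mul_zero, hXY', h2, hab, sub_self, abs_zero]
  · -- main case d > 0
    have hm2 : Real.exp (-4) ≤ 1/2 := by
      have hid : Real.exp (-4) * Real.exp 4 = 1 := by rw [← Real.exp_add]; simp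
      nlinarith [Real.add_one_le_exp (4:ℝ), Real.exp_pos (-4)]
    have habd : |a - b| ≤ d + d ^ 2 := by
      have hsplit : a - b = (γ + t) * (X - Y) + (γ + Y) * (t - s) := by
        rw [ha, hb]; ring
      rw [hsplit]
      calc |(γ + t) * (X - Y) + (γ + Y) * (t - s)|
          ≤ |(γ + t) * (X - Y)| + |(γ + Y) * (t - s)| := abs_add_le _ _
        _ = (γ + t) * |X - Y| + (γ + Y) * |t - s| := by
            rw [abs_mul, abs_mul, abs_of_nonneg (by linarith : (0:ℝ) ≤ γ + t),
              abs_of_nonneg (by linarith : (0:ℝ) ≤ γ + Y)]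
        _ ≤ 1 * d + 1 * d ^ 2 := by
            apply add_le_add
            · apply mul_le_mul (by linarith) hXYd (abs_nonneg _) (by norm_num)
            · apply mul_le_mul (by linarith) htsd (abs_nonneg _) (by norm_num)
        _ = d + d ^ 2 := by ring
    have hMe : 1 / Real.exp (-4) ≤ Real.exp 4 := by
      rw [Real.exp_neg, one_div, inv_inv]
    exact my_main_est hu0 hv0 hv2 hmpos hm2 ham ha1 hbm hb1 hdpos hd2 huv habd hMe
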